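/- Let n ≥ 1, ε > 0, let F : [−1,1]^{n+1} → [−1,1]^n be any function, and define the valuations v_i(A) = (F_i(x(A)) + 1)/2 for i = 1,…,n. If (I^+, I^-) is a partition of [0,1] by at most n cuts such that |v_i(I^+) − v_i(I^-)| ≤ ε/2 for all i ∈ {1,…,n}, then the point y := x(I^+) satisfies max_j |y_j| = 1 (y lies on the boundary of [−1,1]^{n+1}) and ∥F(y) − F(−y)∥_∞ ≤ ε; that is, an (ε/2)-Consensus-Halving of v_1,…,v_n yields an ε-approximate Borsuk–Ulam point of F. -/
import Mathlib


open MeasureTheory Set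

/-- The `j`-th of the `n+1` equal subintervals of `[0,1]`. -/
noncomputable def region (n : ℕ) (j : Fin (n + 1)) : Set ℝ :=
  Icc ((j : ℝ) / ((n : ℝ) + 1)) (((j : ℝ) + 1) / ((n : ℝ) + 1))

/-- The point `x(A) ∈ [−1,1]^{n+1}` with `[x(A)]_j = 2(n+1)·λ(A ∩ R_j) − 1`. -/
noncomputable def xOf (n : ℕ) (A : Set ℝ) : Fin (n + 1) → ℝ :=
  fun j => 2 * ((n : ℝ) + 1) * (volume (A ∩ region n j)).toReal - 1

/-- The valuation `v_i(A) = (F_i(x(A)) + 1)/2`. -/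
noncomputable def valOf (n : ℕ) (F : (Fin (n + 1) → ℝ) → Fin n → ℝ) (i : Fin n)
    (A : Set ℝ) : ℝ :=
  (F (xOf n A) i + 1) / 2

/-- `(Ip, Im)` is a partition of `[0,1]` by at most `n` cuts. -/
def IsCutPartition (n : ℕ) (Ip Im : Set ℝ) : Prop :=
  ∃ (c : ℕ → ℝ) (S : Set ℕ),
    c 0 = 0 ∧ c (n + 1) = 1 ∧ (∀ k ≤ n, c k ≤ c (k + 1)) ∧
    Ip = ⋃ k ∈ {k | k ≤ n ∧ k ∈ S}, Icc (c k) (c (k + 1)) ∧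
    Im = ⋃ k ∈ {k | k ≤ n ∧ k ∉ S}, Icc (c k) (c (k + 1))

/-- An `(ε/2)`-Consensus-Halving of the valuations `v_1, …, v_n` derived from any function
`F` yields a boundary point `y = x(I⁺)` of `[−1,1]^{n+1}` with `‖F(y) − F(−y)‖_∞ ≤ ε`. -/
theorem stmt4 (n : ℕ) (hn : 1 ≤ n) (ε : ℝ) (hε : 0 < ε)
    (F : (Fin (n + 1) → ℝ) → Fin n → ℝ)
    (Ip Im : Set ℝ) (hpart : IsCutPartition n Ip Im)
    (happrox : ∀ i : Fin n, |valOf n F i Ip - valOf n F i Im| ≤ ε / 2) :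
    (∀ j, |xOf n Ip j| ≤ 1) ∧ (∃ j : Fin (n + 1), |xOf n Ip j| = 1) ∧
      ‖F (xOf n Ip) - F (-(xOf n Ip))‖ ≤ ε := by
  classical
  obtain ⟨c, S, hc0, hc1, hmono, hIp, hIm⟩ := hpart
  have hpos : (0:ℝ) < (n:ℝ) + 1 := by positivity
  -- monotone chain
  have hchain : ∀ b, b ≤ n + 1 → ∀ a, a ≤ b → c a ≤ c b := by
    intro b
    induction b with
    | zero => intro _ a ha; interval_cases a; exact le_rfl
    | succ b ih =>
      intro hb a ha
      rcases Nat.eq_or_lt_of_le ha with h | h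
      · exact h ▸ le_rfl
      · exact le_trans (ih (by omega) a (by omega)) (hmono b (by omega))
  -- measurability
  have hImm : MeasurableSet Im := by
    rw [hIm]
    exact MeasurableSet.biUnion (Set.to_countable _) (fun k _ => measurableSet_Icc)
  have hregm : ∀ j : Fin (n+1), MeasurableSet (region n j) := fun j => measurableSet_Icc
  -- Ip ∩ Im is null
  have hsubrange : Ip ∩ Im ⊆ Set.range c := by
    rintro x ⟨hxp, hxm⟩
    rw [hIp] at hxp; rw [hIm] at hxm
    simp only [mem_iUnion, mem_setOf_eq, exists_prop] at hxp hxm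
    obtain ⟨l, ⟨hl, hlS⟩, hxl⟩ := hxp
    obtain ⟨m, ⟨hm, hmS⟩, hxm⟩ := hxm
    have hlm : l ≠ m := fun h => hmS (h ▸ hlS)
    rcases lt_or_gt_of_ne hlm with h | h
    · have h1 : c (l+1) ≤ c m := hchain m (by omega) (l+1) (by omega)
      exact ⟨m, (le_antisymm (hxl.2.trans h1) hxm.1).symm⟩
    · have h1 : c (m+1) ≤ c l := hchain l (by omega) (m+1) (by omega)
      exact ⟨l, (le_antisymm (hxm.2.trans h1) hxl.1).symm⟩
  have hnull : volume (Ip ∩ Im) = 0 :=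
    measure_mono_null hsubrange ((Set.countable_range c).measure_zero _)
  -- [0,1] is covered
  have hcover : Icc (0:ℝ) 1 ⊆ Ip ∪ Im := by
    intro x hx
    set k := Nat.findGreatest (fun k => c k ≤ x) n with hkdef
    have hPk : c k ≤ x := Nat.findGreatest_spec (P := fun k => c k ≤ x) (Nat.zero_le n) ((le_of_eq hc0).trans hx.1)
    have hkn : k ≤ n := Nat.findGreatest_le n
    have hx2 : x ≤ c (k+1) := by
      rcases Nat.lt_or_ge k n with h | h
      · by_contra hcon
        exact Nat.findGreatest_is_greatest (P := fun k => c k ≤ x) (n := n) (by omega) (by omega)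
          (le_of_lt (lt_of_not_ge hcon))
      · have hk : k = n := le_antisymm hkn h
        rw [hk, hc1]; exact hx.2
    by_cases hkS : k ∈ S
    · left; rw [hIp]; exact mem_biUnion ⟨hkn, hkS⟩ ⟨hPk, hx2⟩
    · right; rw [hIm]; exact mem_biUnion ⟨hkn, hkS⟩ ⟨hPk, hx2⟩
  -- region facts
  have hjle : ∀ j : Fin (n+1), (j:ℝ) ≤ (n:ℝ) := by
    intro j
    have : (j:ℕ) ≤ n := Nat.lt_succ_iff.mp j.isLt
    exact_mod_cast this
  have hregsub : ∀ j : Fin (n+1), region n j ⊆ Icc (0:ℝ) 1 := by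
    intro j
    apply Icc_subset_Icc
    · positivity
    · rw [div_le_one hpos]; linarith [hjle j]
  have hregvol : ∀ j : Fin (n+1), volume (region n j) = ENNReal.ofReal (1/((n:ℝ)+1)) := by
    intro j
    rw [region, Real.volume_Icc]
    congr 1
    rw [div_sub_div_same]
    norm_num
  have hfin : ∀ (A : Set ℝ) (j : Fin (n+1)), volume (A ∩ region n j) ≠ ⊤ := by
    intro A j
    refine ne_top_of_le_ne_top ?_ (measure_mono inter_subset_right)
    rw [hregvol j]; exact ENNReal.ofReal_ne_top
  have hμle : ∀ j : Fin (n+1), volume (Ip ∩ region n j) ≤ ENNReal.ofReal (1/((n:ℝ)+1)) :=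
    fun j => (hregvol j) ▸ measure_mono inter_subset_right
  have hinv : ((n:ℝ)+1) * (1/((n:ℝ)+1)) = 1 := by field_simp
  -- part 1
  have part1 : ∀ j : Fin (n+1), |xOf n Ip j| ≤ 1 := by
    intro j
    have h1 : (volume (Ip ∩ region n j)).toReal ≤ 1/((n:ℝ)+1) :=
      ENNReal.toReal_le_of_le_ofReal (by positivity) (hμle j)
    have h2 : 0 ≤ (volume (Ip ∩ region n j)).toReal := ENNReal.toReal_nonneg
    simp only [xOf]
    rw [abs_le]
    constructor <;> nlinarith [hpos, hinv]
  -- sum of measures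
  have hsum : ∀ j : Fin (n+1),
      (volume (Ip ∩ region n j)).toReal + (volume (Im ∩ region n j)).toReal
        = 1/((n:ℝ)+1) := by
    intro j
    have hU : (Ip ∩ region n j) ∪ (Im ∩ region n j) = region n j := by
      apply subset_antisymm
      · exact union_subset inter_subset_right inter_subset_right
      · intro x hx
        rcases hcover (hregsub j hx) with h | h
        · exact Or.inl ⟨h, hx⟩
        · exact Or.inr ⟨h, hx⟩
    have hI : volume ((Ip ∩ region n j) ∩ (Im ∩ region n j)) = 0 := by
      refine measure_mono_null ?_ hnull
      rintro x ⟨⟨h1, _⟩, ⟨h2, _⟩⟩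
      exact ⟨h1, h2⟩
    have key := measure_union_add_inter (μ := volume) (Ip ∩ region n j)
      (hImm.inter (hregm j))
    rw [hU, hI, add_zero, hregvol j] at key
    have h2 : (volume (Ip ∩ region n j) + volume (Im ∩ region n j)).toReal
        = (ENNReal.ofReal (1/((n:ℝ)+1))).toReal := by rw [← key]
    rw [ENNReal.toReal_add (hfin Ip j) (hfin Im j),
      ENNReal.toReal_ofReal (by positivity)] at h2
    exact h2
  -- negation
  have hneg : xOf n Im = -(xOf n Ip) := by
    funext j
    simp only [xOf, Pi.neg_apply]
    have hb : (volume (Im ∩ region n j)).toReal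
        = 1/((n:ℝ)+1) - (volume (Ip ∩ region n j)).toReal := by
      have := hsum j; linarith
    rw [hb]
    nlinarith [hinv]
  -- part 2 : pigeonhole
  have part2 : ∃ j : Fin (n+1), |xOf n Ip j| = 1 := by
    have hpig : ∃ j : Fin (n+1), ∀ k, 1 ≤ k → k ≤ n →
        c k ∉ Ioo ((j:ℝ)/((n:ℝ)+1)) (((j:ℝ)+1)/((n:ℝ)+1)) := by
      by_contra hcon
      push_neg at hcon
      choose g hg1 hg2 hg3 using hcon
      have hginj : Function.Injective g := by
        intro j j' h
        by_contra hne
        have hx := hg3 j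
        have hx' := hg3 j'
        rw [h] at hx
        rcases lt_or_gt_of_ne hne with hlt | hlt
        · have hle : (j:ℝ) + 1 ≤ (j':ℝ) := by
            have : (j:ℕ) + 1 ≤ (j':ℕ) := hlt
            exact_mod_cast this
          have hdd : ((j:ℝ)+1)/((n:ℝ)+1) ≤ (j':ℝ)/((n:ℝ)+1) := by gcongr
          linarith [hx.2, hx'.1]
        · have hle : (j':ℝ) + 1 ≤ (j:ℝ) := by
            have : (j':ℕ) + 1 ≤ (j:ℕ) := hlt
            exact_mod_cast this
          have hdd : ((j':ℝ)+1)/((n:ℝ)+1) ≤ (j:ℝ)/((n:ℝ)+1) := by gcongr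
          linarith [hx'.2, hx.1]
      have hcard : Fintype.card (Fin (n+1)) ≤ Fintype.card (Fin n) := by
        apply Fintype.card_le_of_injective
          (fun j => (⟨g j - 1, by have := hg1 j; have := hg2 j; omega⟩ : Fin n))
        intro j j' h
        have hv : g j - 1 = g j' - 1 := congrArg Fin.val h
        have h1 := hg1 j
        have h1' := hg1 j'
        exact hginj (by omega)
      simp only [Fintype.card_fin] at hcard
      omega
    obtain ⟨j, hj⟩ := hpig
    set a : ℝ := (j:ℝ)/((n:ℝ)+1) with hadef
    set b : ℝ := ((j:ℝ)+1)/((n:ℝ)+1) with hbdef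
    have hregeq : region n j = Icc a b := rfl
    have ha0 : 0 ≤ a := by rw [hadef]; positivity
    set k := Nat.findGreatest (fun k => c k ≤ a) n with hkdef
    have hk1 : c k ≤ a := Nat.findGreatest_spec (P := fun k => c k ≤ a) (Nat.zero_le n) ((le_of_eq hc0).trans ha0)
    have hkn : k ≤ n := Nat.findGreatest_le n
    have hk2 : b ≤ c (k+1) := by
      rcases Nat.lt_or_ge k n with h | h
      · have hgt : ¬ c (k+1) ≤ a :=
          Nat.findGreatest_is_greatest (P := fun k => c k ≤ a) (n := n) (by omega) (by omega)
        have hnot := hj (k+1) (by omega) (by omega)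
        by_contra hcon
        exact hnot ⟨lt_of_not_ge hgt, lt_of_not_ge hcon⟩
      · have hk : k = n := le_antisymm hkn h
        rw [hk, hc1, hbdef, div_le_one hpos]
        linarith [hjle j]
    have hIoosub : Ioo a b ⊆ Icc (c k) (c (k+1)) :=
      fun x hx => ⟨le_of_lt (lt_of_le_of_lt hk1 hx.1), le_of_lt (lt_of_lt_of_le hx.2 hk2)⟩
    have hIoovol : volume (Ioo a b) = ENNReal.ofReal (1/((n:ℝ)+1)) := by
      rw [Real.volume_Ioo]
      congr 1
      rw [hadef, hbdef, div_sub_div_same]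
      norm_num
    by_cases hkS : k ∈ S
    · refine ⟨j, ?_⟩
      have hsubIp : Ioo a b ⊆ Ip ∩ region n j := by
        intro x hx
        refine ⟨?_, hregeq ▸ Ioo_subset_Icc_self hx⟩
        rw [hIp]
        exact mem_biUnion ⟨hkn, hkS⟩ (hIoosub hx)
      have hge : ENNReal.ofReal (1/((n:ℝ)+1)) ≤ volume (Ip ∩ region n j) := by
        rw [← hIoovol]; exact measure_mono hsubIp
      have heq : volume (Ip ∩ region n j) = ENNReal.ofReal (1/((n:ℝ)+1)) :=
        le_antisymm (hμle j) hge
      simp only [xOf]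
      rw [heq, ENNReal.toReal_ofReal (by positivity)]
      have hval : 2*((n:ℝ)+1) * (1/((n:ℝ)+1)) - 1 = 1 := by
        field_simp
        norm_num
      rw [hval]
      norm_num
    · refine ⟨j, ?_⟩
      have hsubIm : Ioo a b ⊆ Im := by
        intro x hx
        rw [hIm]
        exact mem_biUnion ⟨hkn, hkS⟩ (hIoosub hx)
      have hzero : volume (Ip ∩ region n j) = 0 := by
        have hsplit : Ip ∩ region n j ⊆ (Ip ∩ Im) ∪ {a, b} := by
          rintro x ⟨hx1, hx2⟩
          rw [hregeq] at hx2
          rcases eq_or_lt_of_le hx2.1 with h1 | h1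
          · exact Or.inr (Or.inl h1.symm)
          rcases eq_or_lt_of_le hx2.2 with h2 | h2
          · exact Or.inr (Or.inr h2)
          · exact Or.inl ⟨hx1, hsubIm ⟨h1, h2⟩⟩
        refine measure_mono_null hsplit (measure_union_null hnull ?_)
        exact Set.Countable.measure_zero ((Set.countable_singleton b).insert a) _
      simp only [xOf]
      rw [hzero]
      norm_num
  -- part 3
  refine ⟨part1, part2, ?_⟩
  rw [← hneg, pi_norm_le_iff_of_nonneg hε.le]
  intro i
  have h := happrox i
  simp only [valOf] at h
  have hrw : (F (xOf n Ip) i + 1)/2 - (F (xOf n Im) i + 1)/2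
      = (F (xOf n Ip) i - F (xOf n Im) i)/2 := by ring
  rw [hrw, abs_div, abs_two] at h
  rw [Pi.sub_apply, Real.norm_eq_abs]
  linarith
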